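/- arXiv:0705.4324 — 3 statements merged into one kernel-verified Lean document; each statement's English description precedes it below -/
import Mathlib

section
/- Let T/U be an extension of number fields, x ∈ T, and let 𝔗 = n_T(x) be the numerator divisor of x. Let 𝔄 be an integral divisor of U such that 𝔗² divides 𝔄 in the semigroup of integral divisors of T. Let t ∈ U be such that 𝔄 divides the numerator divisor n_T(x − t). Then 𝔗 can be considered as a divisor of U; i.e., for every prime 𝔭 of T with ord_𝔭(x) > 0 one has ord_𝔭(x) = ord_𝔭(t), and the same holds at every conjugate of 𝔭 over U. -/
open NumberField IsDedekindDomain Multiplicative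

/-- `w` is a place of `T` lying above the place `v` of `U`. -/
def LiesAbove {U T : Type*} [Field U] [NumberField U] [Field T] [NumberField T] [Algebra U T]
    (w : HeightOneSpectrum (𝓞 T)) (v : HeightOneSpectrum (𝓞 U)) : Prop :=
  v.asIdeal = Ideal.comap (algebraMap (𝓞 U) (𝓞 T)) w.asIdeal

section Stmt3Aux

open IsDedekindDomain.HeightOneSpectrum

set_option linter.unusedSectionVars false

variable {R : Type*} [CommRing R] [IsDedekindDomain R]

private lemma dvd_map_of_dvd' {S : Type*} [CommRing S] (f : R →+* S) {I J : Ideal R} (h : I ∣ J) :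
    Ideal.map f I ∣ Ideal.map f J := by
  obtain ⟨c, rfl⟩ := h
  exact ⟨Ideal.map f c, Ideal.map_mul f I c⟩

private lemma map_dvd_map_iff' (e : R ≃+* R) {I J : Ideal R} :
    Ideal.map (e : R →+* R) I ∣ Ideal.map (e : R →+* R) J ↔ I ∣ J := by
  have cancel : ∀ I : Ideal R, Ideal.map (e.symm : R →+* R) (Ideal.map (e : R →+* R) I) = I := by
    intro I
    rw [Ideal.map_map]
    simp
  constructor
  · intro h
    have := dvd_map_of_dvd' (e.symm : R →+* R) h
    rwa [cancel, cancel] at this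
  · exact dvd_map_of_dvd' _

private lemma zm0_eq' {a b : WithZero (Multiplicative ℤ)} (ha : a ≠ 0) (hb : b ≠ 0)
    (ha1 : a ≤ 1) (hb1 : b ≤ 1)
    (h : ∀ n : ℕ, a ≤ ((ofAdd (-(n : ℤ)) : Multiplicative ℤ) : WithZero (Multiplicative ℤ)) ↔
      b ≤ ((ofAdd (-(n : ℤ)) : Multiplicative ℤ) : WithZero (Multiplicative ℤ))) : a = b := by
  obtain ⟨ga, rfl⟩ := WithZero.ne_zero_iff_exists.mp ha
  obtain ⟨gb, rfl⟩ := WithZero.ne_zero_iff_exists.mp hb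
  rw [← WithZero.coe_one, WithZero.coe_le_coe] at ha1 hb1
  have ha0 : toAdd ga ≤ 0 := by exact toAdd_le.mpr ha1
  have hb0 : toAdd gb ≤ 0 := by exact toAdd_le.mpr hb1
  have hga : (ofAdd (-(((-(toAdd ga)).toNat : ℕ) : ℤ)) : Multiplicative ℤ) = ga := by
    rw [Int.toNat_of_nonneg (by omega)]
    simp
  have hgb : (ofAdd (-(((-(toAdd gb)).toNat : ℕ) : ℤ)) : Multiplicative ℤ) = gb := by
    rw [Int.toNat_of_nonneg (by omega)]
    simp
  apply le_antisymm
  · have := (h ((-(toAdd gb)).toNat)).mpr (by rw [hgb])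
    rwa [hgb] at this
  · have := (h ((-(toAdd ga)).toNat)).mp (by rw [hga])
    rwa [hga] at this

private lemma intValuation_comap' (e : R ≃+* R) (w w' : HeightOneSpectrum R)
    (h : w'.asIdeal = Ideal.comap (e : R →+* R) w.asIdeal) (r : R) :
    w'.intValuation r = w.intValuation (e r) := by
  have hmap : Ideal.map (e : R →+* R) w'.asIdeal = w.asIdeal := by
    rw [h]
    exact Ideal.map_comap_of_surjective _ e.surjective _
  by_cases hr : r = 0
  · subst hr; simp
  have her : e r ≠ 0 := fun hh => hr (by simpa using congrArg e.symm hh)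
  refine zm0_eq' (intValuation_ne_zero _ _ hr) (intValuation_ne_zero _ _ her)
    (intValuation_le_one _ _) (intValuation_le_one _ _) (fun n => ?_)
  change w'.intValuation r ≤ WithZero.exp (-(n : ℤ)) ↔ w.intValuation (e r) ≤ WithZero.exp (-(n : ℤ))
  rw [intValuation_le_pow_iff_dvd,
    intValuation_le_pow_iff_dvd]
  rw [← map_dvd_map_iff' e (I := w'.asIdeal ^ n), Ideal.map_pow, hmap, Ideal.map_span,
    Set.image_singleton]
  rfl

private lemma valuation_comap_of_ringEquiv' {K : Type*} [Field K] [Algebra R K]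
    [IsFractionRing R K] (e : R ≃+* R) (σ : K ≃+* K)
    (hcomp : ∀ r : R, algebraMap R K (e r) = σ (algebraMap R K r))
    (w w' : HeightOneSpectrum R)
    (h : w'.asIdeal = Ideal.comap (e : R →+* R) w.asIdeal) (y : K) :
    w'.valuation K y = w.valuation K (σ y) := by
  obtain ⟨r, s, hs, rfl⟩ := IsFractionRing.div_surjective (A := R) y
  rw [map_div₀ σ, map_div₀, map_div₀, ← hcomp, ← hcomp,
    valuation_of_algebraMap, valuation_of_algebraMap,
    valuation_of_algebraMap, valuation_of_algebraMap,
    intValuation_comap' e w w' h, intValuation_comap' e w w' h]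

private lemma stmt3_key {T : Type*} [Field T] (v : Valuation T (WithZero (Multiplicative ℤ)))
    (x t' : T) (hx : x ≠ 0) (n : ℕ)
    (h1 : ((ofAdd (-(n : ℤ)) : Multiplicative ℤ) : WithZero (Multiplicative ℤ)) ≤
      (min (v x) 1) ^ 2)
    (h2 : min (v (x - t')) 1 ≤
      ((ofAdd (-(n : ℤ)) : Multiplicative ℤ) : WithZero (Multiplicative ℤ)))
    (hvx : v x < 1) : v t' = v x ∧ n ≠ 0 := by
  have hx0 : v x ≠ 0 := by simpa using hx
  obtain ⟨γ, hγ⟩ := WithZero.ne_zero_iff_exists.mp hx0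
  rw [min_eq_left hvx.le] at h1
  rw [← hγ] at h1 hvx
  rw [← WithZero.coe_one, WithZero.coe_lt_coe] at hvx
  rw [← WithZero.coe_pow, WithZero.coe_le_coe] at h1
  have hγ0 : toAdd γ < 0 := by exact toAdd_lt.mpr hvx
  have h1' : -(n : ℤ) ≤ 2 * toAdd γ := by
    have := h1
    rw [← toAdd_le, toAdd_pow, toAdd_ofAdd] at this
    simpa [two_mul, smul_eq_mul] using this
  have hn : n ≠ 0 := by
    intro h0
    rw [h0] at h1'
    omega
  have hlt : ((ofAdd (-(n : ℤ)) : Multiplicative ℤ) : WithZero (Multiplicative ℤ)) < ↑γ := by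
    rw [WithZero.coe_lt_coe, ← ofAdd_toAdd γ, Multiplicative.ofAdd_lt]
    omega
  have hofadd1 : ((ofAdd (-(n : ℤ)) : Multiplicative ℤ) : WithZero (Multiplicative ℤ)) < 1 := by
    rw [← WithZero.coe_one, WithZero.coe_lt_coe, ← ofAdd_zero, Multiplicative.ofAdd_lt]
    omega
  have hxt : v (x - t') ≤ ((ofAdd (-(n : ℤ)) : Multiplicative ℤ) : WithZero (Multiplicative ℤ)) := by
    rcases min_lt_iff.mp (lt_of_le_of_lt h2 hofadd1) with hc | hc
    · rwa [min_eq_left hc.le] at h2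
    · exact absurd hc (lt_irrefl 1)
  have hlt2 : v (x - t') < v x := by
    rw [← hγ]
    exact lt_of_le_of_lt hxt hlt
  refine ⟨?_, hn⟩
  have := Valuation.map_sub_eq_of_lt_left v hlt2
  rw [show x - (x - t') = t' by ring] at this
  exact this

private lemma stmt3_star {T : Type*} [Field T] (v : Valuation T (WithZero (Multiplicative ℤ)))
    (x t' : T) (n : ℕ) (hn : n ≠ 0)
    (h2 : min (v (x - t')) 1 ≤
      ((ofAdd (-(n : ℤ)) : Multiplicative ℤ) : WithZero (Multiplicative ℤ)))
    (hvt : v t' < 1) : v x < 1 := by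
  have hofadd1 : ((ofAdd (-(n : ℤ)) : Multiplicative ℤ) : WithZero (Multiplicative ℤ)) < 1 := by
    rw [← WithZero.coe_one, WithZero.coe_lt_coe, ← ofAdd_zero, Multiplicative.ofAdd_lt]
    omega
  have hxt : v (x - t') < 1 := by
    rcases min_lt_iff.mp (lt_of_le_of_lt h2 hofadd1) with hc | hc
    · exact hc
    · exact absurd hc (lt_irrefl 1)
  have hle : v x ≤ max (v (x - t')) (v t') := by
    have := v.map_add (x - t') t'
    rwa [show x - t' + t' = x by ring] at this
  exact lt_of_le_of_lt hle (max_lt hxt hvt)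

end Stmt3Aux

/-- Let `T/U` be an extension of number fields, `x ∈ T` nonzero and `𝔄` an integral
divisor of `U`, recorded by its multiplicity function `A` on the primes of `T` (so `A` is the
`T`-factorization of a divisor `B` of `U`, multiplicities multiplying by ramification indices).
If `n_T(x)² ∣ 𝔄` and `𝔄 ∣ n_T(x − t)` for some `t ∈ U`, then at every prime `𝔭` of `T` with
`ord_𝔭 x > 0` (i.e. `valuation < 1`) one has `ord_𝔭 x = ord_𝔭 t > 0`, and likewise at every
conjugate of `𝔭` over `U` (expressed by applying any `σ ∈ Aut(T/U)` to `x`). -/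
theorem stmt3 (U T : Type*) [Field U] [NumberField U] [Field T] [NumberField T] [Algebra U T]
    (x : T) (hx : x ≠ 0) (t : U)
    (A : HeightOneSpectrum (𝓞 T) → ℕ)
    (hAfin : {w : HeightOneSpectrum (𝓞 T) | A w ≠ 0}.Finite)
    -- `𝔄` is (the `T`-factorization of) an integral divisor of `U`:
    (B : HeightOneSpectrum (𝓞 U) → ℕ)
    (hAB : ∀ (w : HeightOneSpectrum (𝓞 T)) (v : HeightOneSpectrum (𝓞 U)), LiesAbove w v →
      A w = Ideal.ramificationIdx' v.asIdeal w.asIdeal * B v)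
    -- `n_T(x)²` divides `𝔄` in the semigroup of integral divisors of `T`:
    (h1 : ∀ w : HeightOneSpectrum (𝓞 T),
      ((ofAdd (-(A w : ℤ)) : Multiplicative ℤ) : WithZero (Multiplicative ℤ)) ≤
        (min (w.valuation T x) 1) ^ 2)
    -- `𝔄` divides `n_T(x − t)`:
    (h2 : ∀ w : HeightOneSpectrum (𝓞 T),
      min (w.valuation T (x - algebraMap U T t)) 1 ≤
        ((ofAdd (-(A w : ℤ)) : Multiplicative ℤ) : WithZero (Multiplicative ℤ))) :
    ∀ w : HeightOneSpectrum (𝓞 T), w.valuation T x < 1 →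
      ∀ σ : T ≃ₐ[U] T,
        w.valuation T (σ x) < 1 ∧ w.valuation T (σ x) = w.valuation T (algebraMap U T t) := by
  intro w hvwx σ
  set t' := algebraMap U T t with ht'
  set E := galRestrict (𝓞 U) U T (𝓞 T) σ with hE
  set e : 𝓞 T ≃+* 𝓞 T := E.toRingEquiv with he
  have hcomp : ∀ r : 𝓞 T, algebraMap (𝓞 T) T (e r) = σ (algebraMap (𝓞 T) T r) := fun r =>
    algebraMap_galRestrict_apply (𝓞 U) σ r
  haveI := w.isPrime
  set w' : HeightOneSpectrum (𝓞 T) :=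
    { asIdeal := Ideal.comap (e : 𝓞 T →+* 𝓞 T) w.asIdeal
      isPrime := Ideal.IsPrime.comap _
      ne_bot := by
        intro hbot
        apply w.ne_bot
        rw [← Ideal.map_comap_of_surjective (e : 𝓞 T →+* 𝓞 T) e.surjective w.asIdeal, hbot,
          Ideal.map_bot] } with hw'
  have hval : ∀ y : T, w'.valuation T y = w.valuation T (σ y) := fun y =>
    valuation_comap_of_ringEquiv' e (σ : T ≃+* T) (fun r => hcomp r) w w' rfl y
  have k1 := stmt3_key (w.valuation T) x t' hx (A w) (h1 w) (h2 w) hvwx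
  have hinjUT : Function.Injective (algebraMap (𝓞 U) (𝓞 T)) := by
    have h3 : Function.Injective (algebraMap (𝓞 U) T) := by
      rw [IsScalarTower.algebraMap_eq (𝓞 U) U T]
      exact (algebraMap U T).injective.comp (IsFractionRing.injective (𝓞 U) U)
    intro a b hab
    apply h3
    have h4 := congrArg (algebraMap (𝓞 T) T) hab
    rwa [← IsScalarTower.algebraMap_apply, ← IsScalarTower.algebraMap_apply] at h4
  set v : HeightOneSpectrum (𝓞 U) :=
    { asIdeal := Ideal.comap (algebraMap (𝓞 U) (𝓞 T)) w.asIdeal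
      isPrime := Ideal.IsPrime.comap _
      ne_bot := Ideal.IsIntegral.comap_ne_bot (𝓞 U) w.ne_bot } with hv
  have hwv : LiesAbove w v := rfl
  have hw'v : LiesAbove w' v := by
    show Ideal.comap (algebraMap (𝓞 U) (𝓞 T)) w.asIdeal
      = Ideal.comap (algebraMap (𝓞 U) (𝓞 T)) (Ideal.comap (e : 𝓞 T →+* 𝓞 T) w.asIdeal)
    rw [Ideal.comap_comap]
    congr 1
    ext a
    simp [he, AlgEquiv.commutes]
  have hBv : B v ≠ 0 := by
    intro h0
    apply k1.2
    rw [hAB w v hwv, h0, mul_zero]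
  have hrami : Ideal.ramificationIdx' v.asIdeal w'.asIdeal ≠ 0 := by
    apply Ideal.IsDedekindDomain.ramificationIdx_ne_zero
    · rw [Ne, Ideal.map_eq_bot_iff_of_injective hinjUT]
      exact v.ne_bot
    · exact w'.isPrime
    · rw [Ideal.map_le_iff_le_comap, ← hw'v]
  have hAw' : A w' ≠ 0 := by
    rw [hAB w' v hw'v]
    exact mul_ne_zero hrami hBv
  have hvt'w : w.valuation T t' < 1 := by
    rw [k1.1]
    exact hvwx
  have hw't' : w'.valuation T t' = w.valuation T t' := by
    rw [hval t', ht', σ.commutes t]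
  have hvx' : w'.valuation T x < 1 :=
    stmt3_star (w'.valuation T) x t' (A w') hAw' (h2 w') (by rw [hw't']; exact hvt'w)
  have k2 := stmt3_key (w'.valuation T) x t' hx (A w') (h1 w') (h2 w') hvx'
  constructor
  · rw [← hval x]
    exact hvx'
  · rw [← hval x, ← k2.1, hw't']
end

section
/- Let G be a number field, x, y ∈ O_G with x² − d·y² = 1 for some d ∈ O_G, and let δ be a square root of d in the algebraic closure of ℚ. If ξ = x − δ·y is a root of unity, then ξ⁴ = 1. -/
open NumberField

/-- Kronecker-type lemma: an algebraic integer in a number field all of whose complex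
embeddings have norm at most `1` is zero or a root of unity. -/
theorem kronecker_le_aux {K : Type*} [Field K] [NumberField K] {x : K}
    (hxi : IsIntegral ℤ x) (hx : ∀ φ : K →+* ℂ, ‖φ x‖ ≤ 1) :
    x = 0 ∨ ∃ n : ℕ, 0 < n ∧ x ^ n = 1 := by
  obtain ⟨a, -, b, -, habne, h⟩ :=
    Set.Infinite.exists_ne_map_eq_of_mapsTo (f := (x ^ · : ℕ → K)) Set.infinite_univ
      (by exact fun a _ => ⟨hxi.pow a, fun φ => by
        rw [map_pow, norm_pow]; exact pow_le_one₀ (norm_nonneg _) (hx φ)⟩)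
      (NumberField.Embeddings.finite_of_norm_le K ℂ 1)
  rcases eq_or_ne x 0 with h0 | h0
  · exact Or.inl h0
  right
  wlog hlt : b < a generalizing a b
  · exact this b a habne.symm h.symm (habne.lt_or_gt.resolve_right hlt)
  refine ⟨a - b, Nat.sub_pos_of_lt hlt, ?_⟩
  rw [← Nat.sub_add_cancel hlt.le, pow_add, mul_left_eq_self₀] at h
  exact h.resolve_right (pow_ne_zero _ h0)

/-- Let `G` be a number field, `x, y ∈ O_G` with `x² − d y² = 1` for some `d ∈ O_G`,
and let `δ` be a square root of `d` in the algebraic closure.  If `ξ = x − δ y` is a root of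
unity, then `ξ⁴ = 1`. -/
theorem stmt8 (G : Type*) [Field G] [NumberField G]
    (x y d : 𝓞 G) (hxy : x ^ 2 - d * y ^ 2 = 1)
    (δ : AlgebraicClosure G) (hδ : δ ^ 2 = algebraMap G (AlgebraicClosure G) (d : G))
    (ξ : AlgebraicClosure G)
    (hξ : ξ = algebraMap G (AlgebraicClosure G) (x : G) -
      δ * algebraMap G (AlgebraicClosure G) (y : G))
    (hroot : ∃ n : ℕ, 0 < n ∧ ξ ^ n = 1) :
    ξ ^ 4 = 1 := by
  obtain ⟨n, hn, hξn⟩ := hroot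
  set f := algebraMap G (AlgebraicClosure G) with hf
  -- the key quadratic relation ξ² - 2·x·ξ + 1 = 0
  have hxy' : (x : G) ^ 2 - (d : G) * (y : G) ^ 2 = 1 := by
    exact_mod_cast congrArg (fun t : 𝓞 G => (t : G)) hxy
  have hmul : ξ * (f (x : G) + δ * f (y : G)) = 1 := by
    rw [hξ]
    have : (f (x : G) - δ * f (y : G)) * (f (x : G) + δ * f (y : G))
        = f ((x : G) ^ 2 - (d : G) * (y : G) ^ 2) := by
      push_cast [map_sub, map_mul, map_pow]
      ring_nf
      rw [← hδ]
      ring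
    rw [this, hxy', map_one]
  have key : ξ ^ 2 - 2 * f (x : G) * ξ + 1 = 0 := by
    have h2 : f (x : G) + δ * f (y : G) = 2 * f (x : G) - ξ := by rw [hξ]; ring
    rw [h2] at hmul
    linear_combination -hmul
  -- for every embedding φ : G →+* ℂ, φ x is the real part of a root of unity
  have hreal : ∀ φ : G →+* ℂ, ∃ z : ℂ, ‖z‖ = 1 ∧ φ (x : G) = (z.re : ℂ) := by
    intro φ
    letI : Algebra G ℂ := φ.toAlgebra
    let ψ : AlgebraicClosure G →ₐ[G] ℂ := IsAlgClosed.lift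
    set z := ψ ξ with hz
    have hzn : z ^ n = 1 := by rw [hz, ← map_pow, hξn, map_one]
    have hznorm : ‖z‖ = 1 := Complex.norm_eq_one_of_pow_eq_one hzn hn.ne'
    refine ⟨z, hznorm, ?_⟩
    have hψf : ∀ a : G, ψ (f a) = φ a := fun a => ψ.commutes a
    have hkey : z ^ 2 - 2 * φ (x : G) * z + 1 = 0 := by
      have := congrArg ψ key
      simpa [map_add, map_sub, map_mul, map_pow, map_one, map_ofNat, hψf] using this
    have hz0 : z ≠ 0 := by
      intro h0
      rw [h0] at hzn
      simp [zero_pow hn.ne'] at hzn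
    have hinv : z⁻¹ = (starRingEnd ℂ) z := Complex.inv_eq_conj hznorm
    have h2x : 2 * φ (x : G) = z + z⁻¹ := by
      field_simp
      linear_combination -hkey
    have : 2 * φ (x : G) = 2 * (z.re : ℂ) := by
      rw [h2x, hinv, Complex.add_conj]
      push_cast
      ring
    have h2 : (2 : ℂ) ≠ 0 := two_ne_zero
    exact mul_left_cancel₀ h2 this
  -- x is an algebraic integer all of whose embeddings have norm ≤ 1
  have hbound : ∀ φ : G →+* ℂ, ‖φ (x : G)‖ ≤ 1 := by
    intro φ
    obtain ⟨z, hz1, hzre⟩ := hreal φ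
    rw [hzre]
    rw [Complex.norm_real]
    calc |z.re| ≤ ‖z‖ := Complex.abs_re_le_norm z
    _ = 1 := hz1
  have hint : IsIntegral ℤ (x : G) := RingOfIntegers.isIntegral_coe x
  rcases kronecker_le_aux hint hbound with hx0 | ⟨m, hm, hxm⟩
  · -- x = 0 : ξ² = -1
    rw [hx0, map_zero] at key
    have : ξ ^ 2 = -1 := by linear_combination key
    rw [show (4 : ℕ) = 2 * 2 by norm_num, pow_mul, this]
    ring
  · -- x is a root of unity, hence x² = 1 since its embeddings are real
    have : Nonempty (G →+* ℂ) := inferInstance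
    obtain ⟨φ⟩ := this
    obtain ⟨z, hz1, hzre⟩ := hreal φ
    have hrm : z.re ^ m = 1 := by
      have : φ ((x : G) ^ m) = 1 := by rw [hxm, map_one]
      rw [map_pow, hzre] at this
      exact_mod_cast this
    have hr2 : z.re ^ 2 = 1 := by
      rcases (pow_eq_one_iff_of_ne_zero hm.ne').mp hrm with h1 | ⟨h1, -⟩ <;>
        rw [h1] <;> ring
    have hx2 : (x : G) ^ 2 = 1 := by
      apply φ.injective
      rw [map_pow, hzre, map_one]
      exact_mod_cast hr2
    have hX2 : f (x : G) ^ 2 = 1 := by rw [← map_pow, hx2, map_one]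
    have hξeq : ξ = f (x : G) := by
      have : (ξ - f (x : G)) ^ 2 = 0 := by linear_combination key + hX2
      have := pow_eq_zero_iff (n := 2) (by norm_num) |>.mp this
      exact sub_eq_zero.mp this
    rw [hξeq, show (4 : ℕ) = 2 * 2 by norm_num, pow_mul, hX2, one_pow]
end

section
/- Let K be a number field and E, G two nontrivial Galois extensions of K with coprime degrees ([E:K],[G:K]) = 1. Let 𝔭_K be a prime of K with no factor of relative degree one in E, and let 𝔭_G be a prime of G above 𝔭_K. Then 𝔭_G has no factor of relative degree one in the compositum GE. -/
open NumberField IsDedekindDomain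

section Aux
variable {K E : Type*} [Field K] [Field E] [NumberField K] [NumberField E]
  [Algebra K E] [IsGalois K E]

lemma aux_exists_map_eq (P Q : Ideal (𝓞 E)) [hPm : P.IsMaximal] [hQm : Q.IsMaximal]
    (h : Ideal.comap (algebraMap (𝓞 K) (𝓞 E)) P = Ideal.comap (algebraMap (𝓞 K) (𝓞 E)) Q) :
    ∃ σ : E ≃ₐ[K] E, Ideal.map (RingOfIntegers.mapAlgEquiv (k := K) σ) P = Q := by
  classical
  letI := AlgEquiv.fintype K E
  have hmax : ∀ σ : E ≃ₐ[K] E,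
      (Ideal.map (RingOfIntegers.mapAlgEquiv (k := K) σ) P).IsMaximal := fun σ =>
    Ideal.map_isMaximal_of_equiv _
  have hsub : (Q : Set (𝓞 E)) ⊆
      ⋃ σ ∈ (Finset.univ : Finset (E ≃ₐ[K] E)),
        (Ideal.map (RingOfIntegers.mapAlgEquiv (k := K) σ) P : Set (𝓞 E)) := by
    intro a ha
    set N : 𝓞 E := ∏ σ : E ≃ₐ[K] E, RingOfIntegers.mapAlgEquiv (k := K) σ a with hN
    have hNcoe : (N : E) = ∏ σ : E ≃ₐ[K] E, σ (a : E) := by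
      rw [hN]
      push_cast [map_prod]
      rfl
    have hfix : ∀ τ : E ≃ₐ[K] E, τ (N : E) = (N : E) := by
      intro τ
      rw [hNcoe, map_prod]
      exact Fintype.prod_equiv (Equiv.mulLeft τ)
        (fun σ => τ (σ (a : E))) (fun σ => σ (a : E)) (fun σ => rfl)
    have hff : IntermediateField.fixedField (⊤ : Subgroup (E ≃ₐ[K] E)) = ⊥ :=
      OrderIso.map_bot (IsGalois.intermediateFieldEquivSubgroup (F := K) (E := E)).symm
    have hbot : (N : E) ∈ (⊥ : IntermediateField K E) := by
      rw [← hff]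
      rintro ⟨τ, -⟩
      exact hfix τ
    obtain ⟨k, hk⟩ := IntermediateField.mem_bot.mp hbot
    have hki : IsIntegral ℤ k :=
      (isIntegral_algebraMap_iff (algebraMap K E).injective).mp (hk ▸ N.2)
    set k' : 𝓞 K := ⟨k, hki⟩ with hk'
    have halg : algebraMap (𝓞 K) (𝓞 E) k' = N := Subtype.ext hk
    have hNQ : N ∈ Q := by
      have h1 : RingOfIntegers.mapAlgEquiv (k := K) (1 : E ≃ₐ[K] E) a = a :=
        Subtype.ext (AlgEquiv.one_apply (a : E))
      rw [hN, ← Finset.mul_prod_erase Finset.univ _ (Finset.mem_univ (1 : E ≃ₐ[K] E)), h1]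
      exact Q.mul_mem_right _ ha
    have hNP : N ∈ P := by
      have : k' ∈ Ideal.comap (algebraMap (𝓞 K) (𝓞 E)) Q := by
        rw [Ideal.mem_comap, halg]; exact hNQ
      rw [← h, Ideal.mem_comap, halg] at this
      exact this
    have hprime : P.IsPrime := hPm.isPrime
    obtain ⟨σ, -, hσ⟩ := (Ideal.IsPrime.prod_mem_iff (hp := hprime)).mp (hN ▸ hNP)
    have hmem : a ∈ Ideal.map (RingOfIntegers.mapAlgEquiv (k := K) σ.symm) P := by
      have hmm := Ideal.mem_map_of_mem
        ((RingOfIntegers.mapAlgEquiv (k := K) σ.symm : (𝓞 E) ≃+* (𝓞 E)) : (𝓞 E) →+* (𝓞 E)) hσ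
      have heq : ((RingOfIntegers.mapAlgEquiv (k := K) σ.symm : (𝓞 E) ≃+* (𝓞 E)) : (𝓞 E) →+* (𝓞 E))
          (RingOfIntegers.mapAlgEquiv (k := K) σ a) = a :=
        Subtype.ext (σ.symm_apply_apply (a : E))
      rw [heq] at hmm
      exact hmm
    exact Set.mem_biUnion (Finset.mem_univ σ.symm) hmem
  obtain ⟨σ, -, hle⟩ := (Ideal.subset_union_prime (1 : E ≃ₐ[K] E) 1
    (fun i _ _ _ => (hmax i).isPrime)).mp hsub
  exact ⟨σ, (hQm.eq_of_le (hmax σ).ne_top hle).symm⟩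

lemma aux_inertiaDeg_dvd (p : Ideal (𝓞 K)) (P : Ideal (𝓞 E)) [hPm : P.IsMaximal]
    (hP0 : P ≠ ⊥) (hp : p = Ideal.comap (algebraMap (𝓞 K) (𝓞 E)) P) :
    Ideal.inertiaDeg' p P ∣ Module.finrank K E := by
  classical
  have hp0 : p ≠ ⊥ := hp ▸ Ideal.IsIntegralClosure.comap_ne_bot (𝓞 K) hP0
  haveI hpm : p.IsMaximal := by
    rw [hp]
    exact Ideal.isMaximal_comap_of_isIntegral_of_isMaximal P
  have hmapne : Ideal.map (algebraMap (𝓞 K) (𝓞 E)) p ≠ ⊥ := by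
    obtain ⟨x, hxp, hx0⟩ := (Submodule.ne_bot_iff p).mp hp0
    refine (Submodule.ne_bot_iff _).mpr ⟨algebraMap (𝓞 K) (𝓞 E) x, Ideal.mem_map_of_mem _ hxp, ?_⟩
    simpa using (map_ne_zero_iff _ (FaithfulSMul.algebraMap_injective (𝓞 K) (𝓞 E))).mpr hx0
  have hsum := Ideal.sum_ramification_inertia (𝓞 E) (p := p) K E hp0
  set s := (UniqueFactorizationMonoid.factors (Ideal.map (algebraMap (𝓞 K) (𝓞 E)) p)).toFinset
    with hs
  have hmem : ∀ Q : Ideal (𝓞 E), Q ∈ s ↔ Q.IsPrime ∧ Ideal.map (algebraMap (𝓞 K) (𝓞 E)) p ≤ Q := by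
    intro Q
    rw [hs, Multiset.mem_toFinset, UniqueFactorizationMonoid.factors_eq_normalizedFactors,
      Ideal.mem_normalizedFactors_iff hmapne]
  have hPs : P ∈ s := (hmem P).mpr ⟨hPm.isPrime, Ideal.map_le_iff_le_comap.mpr hp.le⟩
  have hconst : ∀ Q ∈ s,
      Ideal.ramificationIdx' p Q *
        Ideal.inertiaDeg' p Q =
      Ideal.ramificationIdx' p P *
        Ideal.inertiaDeg' p P := by
    intro Q hQ
    obtain ⟨hQp, hQle⟩ := (hmem Q).mp hQ
    have hQ0 : Q ≠ ⊥ := fun hbot => hmapne (le_bot_iff.mp (hbot ▸ hQle))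
    haveI hQm : Q.IsMaximal := Ring.DimensionLEOne.maximalOfPrime hQ0 hQp
    have hcomapQ : p = Ideal.comap (algebraMap (𝓞 K) (𝓞 E)) Q :=
      hpm.eq_of_le (Ideal.comap_ne_top _ hQm.ne_top) (Ideal.map_le_iff_le_comap.mp hQle)
    obtain ⟨σ, hσ⟩ := aux_exists_map_eq P Q (hp.symm.trans hcomapQ)
    rw [← hσ, Ideal.inertiaDeg'_map_eq, Ideal.ramificationIdx'_map_eq]
  rw [Finset.sum_congr rfl hconst, Finset.sum_const, smul_eq_mul] at hsum
  exact ⟨s.card * Ideal.ramificationIdx' p P, by rw [← hsum]; ring⟩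

end Aux

/-- Let `K` be a number field and `E, G` two nontrivial Galois extensions of `K`
of coprime degrees.  Let `𝔭_K` be a prime of `K` with no factor of relative degree one in `E`,
and `𝔭_G` a prime of `G` above `𝔭_K`.  Then `𝔭_G` has no factor of relative degree one in the
compositum `GE` (realized as a field `L` generated by the images of `E` and `G`). -/
theorem stmt9 (K E G L : Type*) [Field K] [Field E] [Field G] [Field L]
    [NumberField K] [NumberField E] [NumberField G] [NumberField L]
    [Algebra K E] [Algebra K G] [Algebra K L] [Algebra E L] [Algebra G L]
    [IsScalarTower K E L] [IsScalarTower K G L]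
    [IsGalois K E] [IsGalois K G]
    (hE : 1 < Module.finrank K E) (hG : 1 < Module.finrank K G)
    (hcop : Nat.Coprime (Module.finrank K E) (Module.finrank K G))
    (hcomp : (IsScalarTower.toAlgHom K E L).range ⊔ (IsScalarTower.toAlgHom K G L).range =
      (⊤ : Subalgebra K L))
    (pK : HeightOneSpectrum (𝓞 K))
    (hnodeg1 : ∀ w : HeightOneSpectrum (𝓞 E),
      pK.asIdeal = Ideal.comap (algebraMap (𝓞 K) (𝓞 E)) w.asIdeal →
      Ideal.inertiaDeg' pK.asIdeal w.asIdeal ≠ 1)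
    (pG : HeightOneSpectrum (𝓞 G))
    (habove : pK.asIdeal = Ideal.comap (algebraMap (𝓞 K) (𝓞 G)) pG.asIdeal) :
    ∀ w : HeightOneSpectrum (𝓞 L),
      pG.asIdeal = Ideal.comap (algebraMap (𝓞 G) (𝓞 L)) w.asIdeal →
      Ideal.inertiaDeg' pG.asIdeal w.asIdeal ≠ 1 := by
  intro w hw hone
  -- maximality of the various primes
  haveI hwm : w.asIdeal.IsMaximal := Ring.DimensionLEOne.maximalOfPrime w.ne_bot w.isPrime
  haveI hGm : pG.asIdeal.IsMaximal := Ring.DimensionLEOne.maximalOfPrime pG.ne_bot pG.isPrime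
  haveI hKm : pK.asIdeal.IsMaximal := Ring.DimensionLEOne.maximalOfPrime pK.ne_bot pK.isPrime
  -- the prime of E below w
  set pE : Ideal (𝓞 E) := Ideal.comap (algebraMap (𝓞 E) (𝓞 L)) w.asIdeal with hpE
  haveI hpEp : pE.IsPrime := Ideal.IsPrime.comap _
  have hpE0 : pE ≠ ⊥ := Ideal.IsIntegralClosure.comap_ne_bot (𝓞 E) w.ne_bot
  haveI hpEm : pE.IsMaximal := Ring.DimensionLEOne.maximalOfPrime hpE0 hpEp
  -- pE lies above pK
  have hcomapKL : Ideal.comap (algebraMap (𝓞 K) (𝓞 L)) w.asIdeal = pK.asIdeal := by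
    rw [IsScalarTower.algebraMap_eq (𝓞 K) (𝓞 G) (𝓞 L), ← Ideal.comap_comap, ← hw, ← habove]
  have hEabove : pK.asIdeal = Ideal.comap (algebraMap (𝓞 K) (𝓞 E)) pE := by
    rw [hpE, Ideal.comap_comap, ← IsScalarTower.algebraMap_eq (𝓞 K) (𝓞 E) (𝓞 L), hcomapKL]
  -- LiesOver instances
  haveI h1 : pE.LiesOver pK.asIdeal := ⟨hEabove⟩
  haveI h2 : w.asIdeal.LiesOver pE := ⟨rfl⟩
  haveI h3 : pG.asIdeal.LiesOver pK.asIdeal := ⟨habove⟩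
  haveI h4 : w.asIdeal.LiesOver pG.asIdeal := ⟨hw⟩
  -- the two tower formulas for f(w / pK)
  have ht1 := Ideal.inertiaDeg'_algebra_tower pK.asIdeal pE w.asIdeal
  have ht2 := Ideal.inertiaDeg'_algebra_tower pK.asIdeal pG.asIdeal w.asIdeal
  rw [hone, mul_one] at ht2
  -- divisibilities
  have hfE : Ideal.inertiaDeg' pK.asIdeal pE ∣ Module.finrank K E :=
    aux_inertiaDeg_dvd _ _ hpE0 hEabove
  have hfG : Ideal.inertiaDeg' pK.asIdeal pG.asIdeal ∣
      Module.finrank K G := aux_inertiaDeg_dvd _ _ pG.ne_bot habove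
  have hdvdG : Ideal.inertiaDeg' pK.asIdeal pE ∣ Module.finrank K G :=
    dvd_trans ⟨_, (ht1.symm.trans ht2).symm⟩ hfG
  have : Ideal.inertiaDeg' pK.asIdeal pE = 1 :=
    Nat.dvd_one.mp (hcop ▸ Nat.dvd_gcd hfE hdvdG)
  exact hnodeg1 ⟨pE, hpEp, hpE0⟩ hEabove this
end
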